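/- arXiv:math/0207223 — 2 statements merged into one kernel-verified Lean document; each statement's English description precedes it below -/
import Mathlib

section
/- A subset $A$ of a manifold $M$ is slim if and only if every point $x \in A$ has an open neighborhood $U$ in $M$ such that $U \cap A$ is slim. -/
open MeasureTheory

/-- The Lebesgue covering dimension of `X` is at most `n`: every open cover has an
open refinement of order at most `n + 1`. -/
def CovDimLE (X : Type) [TopologicalSpace X] (n : ℕ) : Prop :=
  ∀ (ι : Type) (U : ι → Set X), (∀ i, IsOpen (U i)) → (⋃ i, U i) = Set.univ →
    ∃ (κ : Type) (V : κ → Set X), (∀ j, IsOpen (V j)) ∧ (⋃ j, V j) = Set.univ ∧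
      (∀ j, ∃ i, V j ⊆ U i) ∧ ∀ x : X, {j | x ∈ V j}.encard ≤ n + 1

/-- A subset `A` of a `dM`-dimensional manifold `M` carrying the measure `μ` is
*slim* if it can be covered by countably many closed sets of `μ`-measure zero whose
topological (covering) dimension is at most `dM - 2`. -/
def Slim {M : Type} [TopologicalSpace M] [MeasurableSpace M]
    (μ : Measure M) (dM : ℕ) (A : Set M) : Prop :=
  ∃ F : ℕ → Set M,
    (∀ n, IsClosed (F n) ∧ μ (F n) = 0 ∧ CovDimLE (F n) (dM - 2)) ∧ A ⊆ ⋃ n, F n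

lemma slim_mono {M : Type} [TopologicalSpace M] [MeasurableSpace M]
    {μ : Measure M} {dM : ℕ} {A B : Set M} (hAB : A ⊆ B) (hB : Slim μ dM B) :
    Slim μ dM A := by
  obtain ⟨F, hF, hBF⟩ := hB
  exact ⟨F, hF, hAB.trans hBF⟩

lemma covDimLE_empty {M : Type} [TopologicalSpace M] (n : ℕ) :
    CovDimLE (∅ : Set M) n := by
  intro ι U hU hcov
  exact ⟨ι, U, hU, hcov, fun j => ⟨j, subset_rfl⟩, fun x => x.2.elim⟩

lemma slim_empty {M : Type} [TopologicalSpace M] [MeasurableSpace M]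
    (μ : Measure M) (dM : ℕ) : Slim μ dM (∅ : Set M) := by
  refine ⟨fun _ => ∅, fun n => ⟨isClosed_empty, measure_empty, covDimLE_empty _⟩, ?_⟩
  simp

lemma slim_iUnion_nat {M : Type} [TopologicalSpace M] [MeasurableSpace M]
    {μ : Measure M} {dM : ℕ} {s : ℕ → Set M} (h : ∀ n, Slim μ dM (s n)) :
    Slim μ dM (⋃ n, s n) := by
  choose F hF hs using h
  refine ⟨fun k => F k.unpair.1 k.unpair.2, fun k => hF _ _, ?_⟩
  intro x hx
  obtain ⟨n, hn⟩ := Set.mem_iUnion.1 hx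
  obtain ⟨m, hm⟩ := Set.mem_iUnion.1 (hs n hn)
  exact Set.mem_iUnion.2 ⟨Nat.pair n m, by simpa using hm⟩

/-- Locality: A subset `A` of a manifold `M` is slim iff every point
`x ∈ A` has an open neighborhood `U` in `M` with `U ∩ A` slim. -/
theorem stmt_7 (d : ℕ) (M : Type) [TopologicalSpace M] [T2Space M]
    [SecondCountableTopology M]
    [ChartedSpace (EuclideanSpace ℝ (Fin d)) M]
    [MeasurableSpace M] [BorelSpace M] (μ : Measure M) (A : Set M) :
    Slim μ d A ↔ ∀ x ∈ A, ∃ U : Set M, IsOpen U ∧ x ∈ U ∧ Slim μ d (U ∩ A) := by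
  constructor
  · intro hA x hx
    exact ⟨Set.univ, isOpen_univ, trivial, slim_mono Set.inter_subset_right hA⟩
  · intro h
    rcases A.eq_empty_or_nonempty with rfl | hAne
    · exact slim_empty μ d
    choose! U hUo hxU hUs using h
    obtain ⟨T, hTc, hTU⟩ := TopologicalSpace.isOpen_iUnion_countable
      (fun x : A => U x) (fun x => hUo x x.2)
    have hTne : T.Nonempty := by
      by_contra hT
      rw [Set.not_nonempty_iff_eq_empty] at hT
      obtain ⟨x, hx⟩ := hAne
      have : (x : M) ∈ ⋃ i : A, U i := Set.mem_iUnion.2 ⟨⟨x, hx⟩, hxU x hx⟩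
      rw [← hTU, hT] at this
      simp at this
    obtain ⟨f, hf⟩ := hTc.exists_eq_range hTne
    have key : A ⊆ ⋃ n, (U (f n) ∩ A) := by
      intro x hx
      have : x ∈ ⋃ i ∈ T, U (i : M) := by
        rw [hTU]; exact Set.mem_iUnion.2 ⟨⟨x, hx⟩, hxU x hx⟩
      obtain ⟨i, hiT, hxi⟩ := Set.mem_iUnion₂.1 this
      have : i ∈ Set.range f := hf ▸ hiT
      obtain ⟨n, rfl⟩ := this
      exact Set.mem_iUnion.2 ⟨n, hxi, hx⟩
    refine slim_mono key (slim_iUnion_nat fun n => ?_)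
    exact hUs (f n) (f n).2
end

section
/- Let $R$ be an orthogonal linear map on $\mathbb{R}^d$, let $K$ be a positive semi-definite symmetric operator on a subspace, and let $V_1$ be a linear map into that subspace. For $n^- = (z,w)$ and $n^+ = (Rz - 2\cos\phi\, V_1^* K V_1 R w,\, Rw)$ with $\cos\phi \ge 0$, one has $Q(n^+) = Q(n^-) - 2\cos\phi\, \langle K V_1 R w, V_1 R w\rangle \le Q(n^-)$, where $Q(z,w) = \langle z,w\rangle$. -/
open scoped RealInnerProductSpace

/-- For an orthogonal map `R`, a positive semi-definite symmetric
operator `K` on a subspace `F`, a linear map `V₁ : ℝ^d → F`, and `cos φ ≥ 0`,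
the collision law `nminus = (z,w) ↦ nplus = (Rz - 2cos φ • V₁* K V₁ R w, Rw)` satisfies
`Q(nplus) = Q(nminus) - 2cos φ ⟪K V₁ R w, V₁ R w⟫ ≤ Q(nminus)`, where `Q(z,w) = ⟪z,w⟫`. -/
theorem stmt_10 (d : ℕ)
    {F : Type*} [NormedAddCommGroup F] [InnerProductSpace ℝ F] [FiniteDimensional ℝ F]
    (R : EuclideanSpace ℝ (Fin d) ≃ₗᵢ[ℝ] EuclideanSpace ℝ (Fin d))
    (K : F →ₗ[ℝ] F) (hKsymm : LinearMap.IsSymmetric K)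
    (hKpos : ∀ x : F, 0 ≤ ⟪K x, x⟫)
    (V₁ : EuclideanSpace ℝ (Fin d) →ₗ[ℝ] F)
    (cosφ : ℝ) (hcos : 0 ≤ cosφ)
    (Q : EuclideanSpace ℝ (Fin d) × EuclideanSpace ℝ (Fin d) → ℝ)
    (hQ : ∀ n, Q n = ⟪n.1, n.2⟫)
    (z w : EuclideanSpace ℝ (Fin d))
    (nminus nplus : EuclideanSpace ℝ (Fin d) × EuclideanSpace ℝ (Fin d))
    (hminus : nminus = (z, w))
    (hplus : nplus = (R z - (2 * cosφ) • (LinearMap.adjoint V₁) (K (V₁ (R w))), R w)) :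
    Q nplus = Q nminus - 2 * cosφ * ⟪K (V₁ (R w)), V₁ (R w)⟫ ∧ Q nplus ≤ Q nminus := by
  have key : Q nplus = Q nminus - 2 * cosφ * ⟪K (V₁ (R w)), V₁ (R w)⟫ := by
    subst hminus hplus
    simp only [hQ]
    rw [inner_sub_left, real_inner_smul_left, LinearMap.adjoint_inner_left,
      R.inner_map_map]
  refine ⟨key, ?_⟩
  rw [key]
  have := hKpos (V₁ (R w))
  nlinarith
end
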